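/- Let H be a simple 3-regular bipartite graph on n vertices and let G be the doubling of H. Then the Δ-YY equivalence class of G contains a multigraph with at most n/2 vertices; in particular every multigraph with the minimum number of vertices in the class has at most n/2 vertices. -/

import Mathlib

open scoped Classical

noncomputable section

/-- A multigraph: a finite vertex type together with a symmetric multiplicity
function recording the size of the connection (set of parallel edges) between
any two vertices; there are no loops. -/
structure MG : Type 1 where
  V : Type
  fin : Fintype V
  mult : V → V → ℕ
  symm : ∀ u v, mult u v = mult v u
  loopless : ∀ v, mult v v = 0

namespace MG

/-- Two vertices are adjacent when their connection is non-empty. -/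
def Adj (G : MG) (u v : G.V) : Prop := 0 < G.mult u v

/-- Connection size as a function on unordered pairs of vertices. -/
def multS (G : MG) : Sym2 G.V → ℕ := Sym2.lift ⟨G.mult, G.symm⟩

/-- Number of vertices. -/
def order (G : MG) : ℕ := @Fintype.card G.V G.fin

/-- Degree of a vertex, counting edges with multiplicity. -/
def deg (G : MG) (v : G.V) : ℕ :=
  haveI := G.fin
  ∑ u, G.mult v u

/-- `G` is `k`-regular. -/
def Regular (G : MG) (k : ℕ) : Prop := ∀ v, G.deg v = k

/-- A simple graph: every connection has size at most 1. -/
def Simple (G : MG) : Prop := ∀ u v, G.mult u v ≤ 1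

/-- Isomorphism of multigraphs. -/
def Iso (G H : MG) : Prop :=
  ∃ e : G.V ≃ H.V, ∀ u v, H.mult (e u) (e v) = G.mult u v

/-- Indicator: is `{a,b}` one of the three pairs `{u,v}, {u,w}, {v,w}`? -/
def triCount {V : Type} (u v w a b : V) : ℕ :=
  if s(a, b) ∈ ({s(u, v), s(u, w), s(v, w)} : Set (Sym2 V)) then 1 else 0

lemma triCount_symm {V : Type} (u v w a b : V) :
    triCount u v w a b = triCount u v w b a := by
  unfold triCount
  have h : s(a, b) = s(b, a) := Sym2.eq_swap
  rw [h]

/-- `u, v, w` form a delta (triangle): pairwise distinct and pairwise adjacent. -/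
def IsDelta (G : MG) (u v w : G.V) : Prop :=
  u ≠ v ∧ u ≠ w ∧ v ≠ w ∧ G.Adj u v ∧ G.Adj u w ∧ G.Adj v w

/-- `x` is the centre of a wye with external vertices `u, v, w`: the edges
incident to `x` are exactly two parallel edges to each of `u, v, w`. -/
def IsWye (G : MG) (x u v w : G.V) : Prop :=
  u ≠ v ∧ u ≠ w ∧ v ≠ w ∧ x ≠ u ∧ x ≠ v ∧ x ≠ w ∧
    G.mult x u = 2 ∧ G.mult x v = 2 ∧ G.mult x w = 2 ∧
    ∀ y : G.V, y ≠ u → y ≠ v → y ≠ w → G.mult x y = 0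

/-- Multiplicity function of the result of a Δ-YY transformation on the
delta `u, v, w`; the new vertex `x` is `none`. -/
def deltaMult (G : MG) (u v w : G.V) : Option G.V → Option G.V → ℕ
  | none, none => 0
  | none, some b => if b = u ∨ b = v ∨ b = w then 2 else 0
  | some a, none => if a = u ∨ a = v ∨ a = w then 2 else 0
  | some a, some b => G.mult a b - triCount u v w a b

/-- The result of the Δ-YY transformation on the delta `u, v, w`: one edge of
each of the connections `uv`, `uw`, `vw` is removed, a new vertex (`none`) is
added, joined by two parallel edges to each of `u, v, w`. -/
def deltaYY (G : MG) (u v w : G.V) : MG where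
  V := Option G.V
  fin := by haveI := G.fin; infer_instance
  mult := G.deltaMult u v w
  symm := by
    rintro (_ | a) (_ | b)
    · rfl
    · rfl
    · rfl
    · show G.mult a b - triCount u v w a b = G.mult b a - triCount u v w b a
      rw [G.symm a b, triCount_symm]
  loopless := by
    rintro (_ | a)
    · rfl
    · show G.mult a a - triCount u v w a a = 0
      rw [G.loopless]
      exact Nat.zero_sub _

/-- The result of the YY-Δ transformation on a wye with centre `x` and external
vertices `u, v, w`: the vertex `x` is deleted together with all its incident
edges, and one new edge is added to each of the connections `uv`, `uw`, `vw`. -/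
def yyDelta (G : MG) (x u v w : G.V) : MG where
  V := {y : G.V // y ≠ x}
  fin := by haveI := G.fin; infer_instance
  mult a b := if a = b then 0 else G.mult a.1 b.1 + triCount u v w a.1 b.1
  symm := by
    intro a b
    try dsimp only
    rcases eq_or_ne a b with h | h
    · subst h; rfl
    · rw [if_neg h, if_neg h.symm, G.symm a.1 b.1, triCount_symm]
  loopless := fun a => if_pos rfl

/-- `G'` is obtained from `G` by a Δ-YY transformation. -/
def DeltaYYStep (G G' : MG) : Prop :=
  ∃ u v w : G.V, G.IsDelta u v w ∧ Iso (G.deltaYY u v w) G'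

/-- `G'` is obtained from `G` by a YY-Δ transformation. -/
def YYDeltaStep (G G' : MG) : Prop :=
  ∃ x u v w : G.V, G.IsWye x u v w ∧ Iso (G.yyDelta x u v w) G'

/-- `G'` is obtained from `G` by a Δ-YY operation (either a Δ-YY transformation
or a YY-Δ transformation). -/
def Step (G G' : MG) : Prop := DeltaYYStep G G' ∨ YYDeltaStep G G'

/-- Δ-YY equivalence: `G` can be transformed into `H`, up to isomorphism, by a
finite sequence of Δ-YY operations. -/
def DYYEquiv : MG → MG → Prop :=
  Relation.EqvGen (fun G G' => Step G G' ∨ Iso G G')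

/-- The Δ-YY equivalence class of `G` contains only finitely many isomorphism
classes of multigraphs. -/
def FiniteClass (G : MG) : Prop :=
  ∃ S : Finset MG, ∀ H : MG, DYYEquiv G H → ∃ H' ∈ S, Iso H H'

/-- Connectivity: nonempty, and any two vertices are joined by a path. -/
def Connected (G : MG) : Prop :=
  Nonempty G.V ∧ ∀ u v : G.V, Relation.ReflTransGen G.Adj u v

/-- The multigraph obtained by deleting a set of vertices (and all edges
incident to them). -/
def deleteVerts (G : MG) (S : Set G.V) : MG where
  V := {y : G.V // y ∉ S}
  fin := by haveI := G.fin; infer_instance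
  mult a b := G.mult a.1 b.1
  symm := fun a b => G.symm a.1 b.1
  loopless := fun a => G.loopless a.1

/-- `G` is `k`-connected: it has more than `k` vertices and deleting any set of
fewer than `k` vertices leaves a connected multigraph. -/
def KConnected (G : MG) (k : ℕ) : Prop :=
  k < G.order ∧ ∀ S : Set G.V, S.ncard < k → (G.deleteVerts S).Connected

/-- `G` is planar: it has a drawing in the plane in which vertices are distinct
points, every edge (each parallel edge separately) is a continuous injective
arc joining the points of its endpoints, no arc passes through a vertex point
in its interior, and the interiors of the arcs of distinct edges are disjoint.
The arc of the `k`-th edge from `v` to `u` is the reverse of the arc of the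
`k`-th edge from `u` to `v` (they are the same edge drawn once). -/
def IsPlanar (G : MG) : Prop :=
  ∃ (pos : G.V → ℝ × ℝ) (γ : G.V → G.V → ℕ → C(unitInterval, ℝ × ℝ)),
    Function.Injective pos ∧
    (∀ u v k, k < G.mult u v →
      γ u v k 0 = pos u ∧ γ u v k 1 = pos v ∧ Function.Injective (γ u v k)) ∧
    (∀ u v k (t : unitInterval), γ v u k t = γ u v k (unitInterval.symm t)) ∧
    (∀ u v k, k < G.mult u v → ∀ t : unitInterval, t ≠ 0 → t ≠ 1 →
      ∀ z : G.V, γ u v k t ≠ pos z) ∧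
    (∀ u v k u' v' k', k < G.mult u v → k' < G.mult u' v' →
      (s(u, v) ≠ s(u', v') ∨ k ≠ k') →
      ∀ t t' : unitInterval, t ≠ 0 → t ≠ 1 → t' ≠ 0 → t' ≠ 1 →
        γ u v k t ≠ γ u' v' k' t')

/-- An independent set: no two of its vertices are adjacent. -/
def IsIndepSet (G : MG) (S : Set G.V) : Prop :=
  ∀ u ∈ S, ∀ v ∈ S, ¬ G.Adj u v

/-- The independence number `α(G)`: the maximum size of an independent set. -/
def indepNum (G : MG) : ℕ :=
  sSup {n | ∃ S : Set G.V, G.IsIndepSet S ∧ S.ncard = n}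

/-- The number of non-empty connections, i.e. the number of edges of the
simplification `G^S`. -/
def numConn (G : MG) : ℕ := {p : Sym2 G.V | G.multS p ≠ 0}.ncard

/-- The cyclomatic number `m - n + 1` of the simplification `G^S` of `G`. -/
def cyclomaticS (G : MG) : ℤ := (G.numConn : ℤ) - (G.order : ℤ) + 1

/-- `AddOnAt G a S` : the vertex set `S` of `G` carries (a subgraph copy of) an
add-on whose addition vertex is `a`.  An add-on of length 0 is a double edge or
a delta; an add-on of length `n ≥ 1` is a 4-cycle `a b c d` with the
connections `ab`, `ad` of size 1 and `bc`, `cd` of size 2, glued at `c` to an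
add-on of length `n - 1`. -/
inductive AddOnAt (G : MG) : G.V → Set G.V → Prop
  | double (a b : G.V) : a ≠ b → 2 ≤ G.mult a b → AddOnAt G a {a, b}
  | delta (a b c : G.V) : a ≠ b → a ≠ c → b ≠ c →
      1 ≤ G.mult a b → 1 ≤ G.mult a c → 1 ≤ G.mult b c → AddOnAt G a {a, b, c}
  | link (a b c d : G.V) (S : Set G.V) :
      a ≠ b → a ≠ c → a ≠ d → b ≠ c → b ≠ d → c ≠ d →
      1 ≤ G.mult a b → 1 ≤ G.mult a d → 2 ≤ G.mult b c → 2 ≤ G.mult c d →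
      AddOnAt G c S → S ∩ {a, b, d} = ∅ → AddOnAt G a ({a, b, d} ∪ S)

/-- `G` contains one of the four families of excluded subgraphs. -/
def HasExcluded (G : MG) : Prop :=
  -- (1) a 3-cycle in which at least one connection has size at least 2
  (∃ a b c : G.V, a ≠ b ∧ a ≠ c ∧ b ≠ c ∧
      2 ≤ G.mult a b ∧ 1 ≤ G.mult a c ∧ 1 ≤ G.mult b c) ∨
  -- (2) a 4-cycle with at least three connections of size at least 2 and an
  -- add-on glued at a vertex incident to two of them
  (∃ a b c d : G.V, ∃ S : Set G.V,
      a ≠ b ∧ a ≠ c ∧ a ≠ d ∧ b ≠ c ∧ b ≠ d ∧ c ≠ d ∧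
      2 ≤ G.mult a b ∧ 2 ≤ G.mult b c ∧ 2 ≤ G.mult c d ∧ 1 ≤ G.mult d a ∧
      AddOnAt G b S ∧ S ∩ {a, c, d} = ∅) ∨
  -- (3) a 5-cycle with all connections of size at least 2 and add-ons glued at
  -- two non-adjacent vertices of the cycle
  (∃ v₀ v₁ v₂ v₃ v₄ : G.V, ∃ S T : Set G.V,
      v₀ ≠ v₁ ∧ v₀ ≠ v₂ ∧ v₀ ≠ v₃ ∧ v₀ ≠ v₄ ∧ v₁ ≠ v₂ ∧ v₁ ≠ v₃ ∧ v₁ ≠ v₄ ∧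
      v₂ ≠ v₃ ∧ v₂ ≠ v₄ ∧ v₃ ≠ v₄ ∧
      2 ≤ G.mult v₀ v₁ ∧ 2 ≤ G.mult v₁ v₂ ∧ 2 ≤ G.mult v₂ v₃ ∧
      2 ≤ G.mult v₃ v₄ ∧ 2 ≤ G.mult v₄ v₀ ∧
      AddOnAt G v₀ S ∧ AddOnAt G v₂ T ∧
      S ∩ {v₁, v₂, v₃, v₄} = ∅ ∧ T ∩ {v₀, v₁, v₃, v₄} = ∅ ∧ S ∩ T = ∅) ∨
  -- (4) a 4-cycle with three connections of size at least 2, whose fourth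
  -- connection has size 1 and lies in a triangle, with add-ons glued at both
  -- vertices of that connection
  (∃ a b c d e : G.V, ∃ S T : Set G.V,
      a ≠ b ∧ a ≠ c ∧ a ≠ d ∧ a ≠ e ∧ b ≠ c ∧ b ≠ d ∧ b ≠ e ∧
      c ≠ d ∧ c ≠ e ∧ d ≠ e ∧
      2 ≤ G.mult a b ∧ 2 ≤ G.mult b c ∧ 2 ≤ G.mult c d ∧ G.mult d a = 1 ∧
      1 ≤ G.mult d e ∧ 1 ≤ G.mult e a ∧
      AddOnAt G a S ∧ AddOnAt G d T ∧
      S ∩ {b, c, d, e} = ∅ ∧ T ∩ {a, b, c, e} = ∅ ∧ S ∩ T = ∅)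

/-- The doubling of a simple graph: every edge is replaced by a connection of
size 2. -/
def doubling {V : Type} [Fintype V] (H : SimpleGraph V) : MG where
  V := V
  fin := inferInstance
  mult u v := if H.Adj u v then 2 else 0
  symm := by
    intro u v
    try dsimp only
    by_cases h : H.Adj u v
    · rw [if_pos h, if_pos h.symm]
    · rw [if_neg h, if_neg fun h' => h h'.symm]
  loopless := fun v => if_neg (H.loopless.irrefl v)

end MG

end

noncomputable section AuxStmt12

variable {V : Type} [Fintype V] (H : SimpleGraph V) [DecidableRel H.Adj]

/-- Intermediate multigraph: the doubling of `H` after performing YY-Δ at each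
vertex of `S` (assuming `S` lies in one side of a bipartition). -/
noncomputable def auxMG (S : Finset V) : MG where
  V := {v : V // v ∉ S}
  fin := inferInstance
  mult a b := if a.1 = b.1 then 0 else
    (if H.Adj a.1 b.1 then 2 else 0) +
      (S.filter (fun s => H.Adj s a.1 ∧ H.Adj s b.1)).card
  symm := by
    rintro ⟨a, _⟩ ⟨b, _⟩
    dsimp only
    rcases eq_or_ne a b with h | h
    · simp [h]
    · rw [if_neg h, if_neg h.symm]
      congr 1
      · exact if_congr (H.adj_comm a b) rfl rfl
      · congr 1
        apply Finset.filter_congr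
        intro s _
        exact and_comm
  loopless := by rintro ⟨a, _⟩; simp

lemma auxMG_mult (S : Finset V) (a b : {v : V // v ∉ S}) :
    (auxMG H S).mult a b = if a.1 = b.1 then 0 else
      (if H.Adj a.1 b.1 then 2 else 0) +
      (S.filter (fun s => H.Adj s a.1 ∧ H.Adj s b.1)).card := rfl

lemma doubling_mult (u v : V) :
    (MG.doubling H).mult u v = if H.Adj u v then 2 else 0 := by
  by_cases h : H.Adj u v
  · rw [if_pos h]; exact if_pos h
  · rw [if_neg h]; exact if_neg h

lemma yyDelta_mult (G : MG) (x u v w : G.V) (a b : {y : G.V // y ≠ x}) :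
    (G.yyDelta x u v w).mult a b =
      if a = b then 0 else G.mult a.1 b.1 + MG.triCount u v w a.1 b.1 := rfl

lemma auxMG_iso_empty : MG.Iso (MG.doubling H) (auxMG H (∅ : Finset V)) := by
  let e : (MG.doubling H).V ≃ (auxMG H (∅ : Finset V)).V :=
    ⟨fun v => ⟨v, fun h => Finset.notMem_empty (α := V) v h⟩, fun x => x.1, fun v => rfl, fun x => rfl⟩
  refine ⟨e, ?_⟩
  intro u v
  rw [auxMG_mult H _ (e u) (e v), doubling_mult H u v]
  have hep : (e u).1 = u := rfl
  have heq2 : (e v).1 = v := rfl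
  rw [hep, heq2]
  rcases @eq_or_ne V u v with rfl | h
  · rw [if_pos (@rfl V u), if_neg (H.loopless.irrefl u)]
  · rw [if_neg h, Finset.filter_empty, Finset.card_empty, Nat.add_zero]

lemma triCount_eq {α : Type} (u v w p q : α)
    (huv : u ≠ v) (huw : u ≠ w) (hvw : v ≠ w) (hpq : p ≠ q) :
    MG.triCount u v w p q =
      if (p = u ∨ p = v ∨ p = w) ∧ (q = u ∨ q = v ∨ q = w) then 1 else 0 := by
  have key : s(p, q) ∈ ({s(u, v), s(u, w), s(v, w)} : Set (Sym2 α)) ↔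
      ((p = u ∨ p = v ∨ p = w) ∧ (q = u ∨ q = v ∨ q = w)) := by
    simp only [Set.mem_insert_iff, Set.mem_singleton_iff, Sym2.eq_iff]
    constructor
    · tauto
    · rintro ⟨(rfl | rfl | rfl), (rfl | rfl | rfl)⟩ <;> simp_all
  unfold MG.triCount
  exact if_congr key rfl rfl

lemma step_aux (A : Set V)
    (hbip : ∀ u v : V, H.Adj u v → ((u ∈ A ∧ v ∉ A) ∨ (u ∉ A ∧ v ∈ A)))
    (h3 : H.IsRegularOfDegree 3)
    (S : Finset V) (hS : ∀ s ∈ S, s ∈ A) (a : V) (ha : a ∈ A) (haS : a ∉ S) :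
    MG.YYDeltaStep (auxMG H S) (auxMG H (insert a S)) := by
  obtain ⟨u, v, w, huv, huw, hvw, hN⟩ := Finset.card_eq_three.mp (h3 a)
  have hadj : ∀ b : V, H.Adj a b ↔ (b = u ∨ b = v ∨ b = w) := by
    intro b
    rw [← SimpleGraph.mem_neighborFinset, hN]
    simp
  have hnA : ∀ b : V, H.Adj a b → b ∉ A := by
    intro b hb
    rcases hbip a b hb with ⟨_, h⟩ | ⟨h, _⟩
    · exact h
    · exact absurd ha h
  have hAA : ∀ s b : V, s ∈ A → b ∈ A → ¬ H.Adj s b := by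
    intro s b hs hb hadj'
    rcases hbip s b hadj' with ⟨_, h⟩ | ⟨h, _⟩
    · exact h hb
    · exact h hs
  have hu : H.Adj a u := (hadj u).mpr (Or.inl rfl)
  have hv : H.Adj a v := (hadj v).mpr (Or.inr (Or.inl rfl))
  have hw : H.Adj a w := (hadj w).mpr (Or.inr (Or.inr rfl))
  have huS : u ∉ S := fun h => hnA u hu (hS u h)
  have hvS : v ∉ S := fun h => hnA v hv (hS v h)
  have hwS : w ∉ S := fun h => hnA w hw (hS w h)
  have hau : a ≠ u := H.ne_of_adj hu
  have hav : a ≠ v := H.ne_of_adj hv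
  have haw : a ≠ w := H.ne_of_adj hw
  have hmk : ∀ (z : V) (hz : z ∉ S), ((⟨z, hz⟩ : {y : V // y ∉ S}) : V) = z :=
    fun _ _ => rfl
  have hfilter : ∀ b : V, S.filter (fun s => H.Adj s a ∧ H.Adj s b) = ∅ := by
    intro b
    rw [Finset.filter_eq_empty_iff]
    intro s hs hc
    exact hAA s a (hS s hs) ha hc.1
  have hwye : (auxMG H S).IsWye ⟨a, haS⟩ ⟨u, huS⟩ ⟨v, hvS⟩ ⟨w, hwS⟩ := by
    refine ⟨fun h => huv (congrArg Subtype.val h), fun h => huw (congrArg Subtype.val h),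
      fun h => hvw (congrArg Subtype.val h), fun h => hau (congrArg Subtype.val h),
      fun h => hav (congrArg Subtype.val h), fun h => haw (congrArg Subtype.val h),
      ?_, ?_, ?_, ?_⟩
    · rw [auxMG_mult]
      simp [hau, hu, hfilter u]
    · rw [auxMG_mult]
      simp [hav, hv, hfilter v]
    · rw [auxMG_mult]
      simp [haw, hw, hfilter w]
    · rintro ⟨y, hyS⟩ hyu hyv hyw
      have h1 : y ≠ u := fun h => hyu (Subtype.ext h)
      have h2 : y ≠ v := fun h => hyv (Subtype.ext h)
      have h3' : y ≠ w := fun h => hyw (Subtype.ext h)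
      rw [auxMG_mult]
      rcases eq_or_ne a y with h | h
      · simp [h]
      · have hna : ¬ H.Adj a y := by
          rw [hadj]
          push_neg
          exact ⟨h1, h2, h3'⟩
        simp [h, hna, hfilter y]
  refine ⟨⟨a, haS⟩, ⟨u, huS⟩, ⟨v, hvS⟩, ⟨w, hwS⟩, hwye, ?_⟩
  let e : ((auxMG H S).yyDelta ⟨a, haS⟩ ⟨u, huS⟩ ⟨v, hvS⟩ ⟨w, hwS⟩).V ≃
      (auxMG H (insert a S)).V :=
    ⟨fun y => ⟨y.1.1, by
        rw [Finset.mem_insert]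
        push_neg
        exact ⟨fun h => y.2 (Subtype.ext h), y.1.2⟩⟩,
     fun z => ⟨⟨z.1, fun h => z.2 (Finset.mem_insert_of_mem h)⟩,
        fun h => z.2 (by
          rw [show z.1 = a from congrArg Subtype.val h]
          exact Finset.mem_insert_self a S)⟩,
     fun y => rfl, fun z => rfl⟩
  refine ⟨e, ?_⟩
  intro p q
  rw [auxMG_mult H _ (e p) (e q), yyDelta_mult (auxMG H S) ⟨a, haS⟩ ⟨u, huS⟩ ⟨v, hvS⟩ ⟨w, hwS⟩ p q, auxMG_mult H S p.1 q.1]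
  have hep : (e p).1 = p.1.1 := rfl
  have heq2 : (e q).1 = q.1.1 := rfl
  rw [hep, heq2]
  rcases @eq_or_ne V p.1.1 q.1.1 with hbc | hbc
  · have hpq : p = q := Subtype.ext (Subtype.ext hbc)
    rw [if_pos hbc]
    exact (if_pos hpq).symm
  · have hpq : p ≠ q := fun h => hbc (congrArg
      (fun z : ((auxMG H S).yyDelta ⟨a, haS⟩ ⟨u, huS⟩ ⟨v, hvS⟩ ⟨w, hwS⟩).V => z.1.1) h)
    rw [if_neg hbc]
    refine Eq.trans ?_ (if_neg hpq).symm
    rw [if_neg hbc]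
    have hne1 : (⟨u, huS⟩ : (auxMG H S).V) ≠ ⟨v, hvS⟩ :=
      fun h => huv (congrArg Subtype.val h)
    have hne2 : (⟨u, huS⟩ : (auxMG H S).V) ≠ ⟨w, hwS⟩ :=
      fun h => huw (congrArg Subtype.val h)
    have hne3 : (⟨v, hvS⟩ : (auxMG H S).V) ≠ ⟨w, hwS⟩ :=
      fun h => hvw (congrArg Subtype.val h)
    have hne4 : p.1 ≠ q.1 := fun h => hbc (congrArg Subtype.val h)
    refine Eq.trans ?_ (congrArg (HAdd.hAdd _) (triCount_eq _ _ _ _ _ hne1 hne2 hne3 hne4)).symm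
    by_cases hpqadj : H.Adj a p.1.1 ∧ H.Adj a q.1.1
    · have hp3 : p.1 = (⟨u, huS⟩ : (auxMG H S).V) ∨ p.1 = ⟨v, hvS⟩ ∨ p.1 = ⟨w, hwS⟩ := by
        rcases (hadj _).mp hpqadj.1 with h | h | h
        · exact Or.inl (Subtype.ext h)
        · exact Or.inr (Or.inl (Subtype.ext h))
        · exact Or.inr (Or.inr (Subtype.ext h))
      have hq3 : q.1 = (⟨u, huS⟩ : (auxMG H S).V) ∨ q.1 = ⟨v, hvS⟩ ∨ q.1 = ⟨w, hwS⟩ := by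
        rcases (hadj _).mp hpqadj.2 with h | h | h
        · exact Or.inl (Subtype.ext h)
        · exact Or.inr (Or.inl (Subtype.ext h))
        · exact Or.inr (Or.inr (Subtype.ext h))
      refine Eq.trans ?_ (congrArg (HAdd.hAdd _) (if_pos (And.intro hp3 hq3))).symm
      have hfi : ((insert a S).filter (fun s => H.Adj s p.1.1 ∧ H.Adj s q.1.1)).card =
          (S.filter (fun s => H.Adj s p.1.1 ∧ H.Adj s q.1.1)).card + 1 := by
        rw [Finset.filter_insert, if_pos hpqadj, Finset.card_insert_of_notMem
          (fun hmem => haS (Finset.mem_of_mem_filter a hmem))]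
      rw [hfi]
      omega
    · have himp : ((p.1 = (⟨u, huS⟩ : (auxMG H S).V) ∨ p.1 = ⟨v, hvS⟩ ∨ p.1 = ⟨w, hwS⟩) ∧
          (q.1 = (⟨u, huS⟩ : (auxMG H S).V) ∨ q.1 = ⟨v, hvS⟩ ∨ q.1 = ⟨w, hwS⟩)) →
          (H.Adj a p.1.1 ∧ H.Adj a q.1.1) := by
        rintro ⟨hb3, hc3⟩
        constructor
        · rcases hb3 with h | h | h
          · exact (hadj _).mpr (Or.inl (congrArg Subtype.val h))
          · exact (hadj _).mpr (Or.inr (Or.inl (congrArg Subtype.val h)))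
          · exact (hadj _).mpr (Or.inr (Or.inr (congrArg Subtype.val h)))
        · rcases hc3 with h | h | h
          · exact (hadj _).mpr (Or.inl (congrArg Subtype.val h))
          · exact (hadj _).mpr (Or.inr (Or.inl (congrArg Subtype.val h)))
          · exact (hadj _).mpr (Or.inr (Or.inr (congrArg Subtype.val h)))
      refine Eq.trans ?_ (congrArg (HAdd.hAdd _) (if_neg (fun hc => hpqadj (himp hc)))).symm
      have hfi : ((insert a S).filter (fun s => H.Adj s p.1.1 ∧ H.Adj s q.1.1)).card =
          (S.filter (fun s => H.Adj s p.1.1 ∧ H.Adj s q.1.1)).card := by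
        rw [Finset.filter_insert, if_neg hpqadj]
      rw [hfi]
      omega

lemma chain_aux (A : Set V)
    (hbip : ∀ u v : V, H.Adj u v → ((u ∈ A ∧ v ∉ A) ∨ (u ∉ A ∧ v ∈ A)))
    (h3 : H.IsRegularOfDegree 3) :
    ∀ S : Finset V, (∀ s ∈ S, s ∈ A) →
      MG.DYYEquiv (MG.doubling H) (auxMG H S) := by
  intro S
  induction S using Finset.induction_on with
  | empty =>
    intro _
    exact Relation.EqvGen.rel _ _ (Or.inr (auxMG_iso_empty H))
  | @insert a S haS ih =>
    intro hsub
    have hS : ∀ s ∈ S, s ∈ A := fun s hs => hsub s (Finset.mem_insert_of_mem hs)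
    have ha : a ∈ A := hsub a (Finset.mem_insert_self a S)
    exact Relation.EqvGen.trans _ _ _ (ih hS)
      (Relation.EqvGen.rel _ _
        (Or.inl (Or.inr (step_aux H A hbip h3 S hS a ha haS))))

lemma count_aux (A : Set V)
    (hbip : ∀ u v : V, H.Adj u v → ((u ∈ A ∧ v ∉ A) ∨ (u ∉ A ∧ v ∈ A)))
    (h3 : H.IsRegularOfDegree 3) :
    Fintype.card V = 2 * (Finset.univ.filter (fun x => x ∈ A)).card := by
  have hdeg : ∀ x : V, (Finset.univ.filter (H.Adj x)).card = 3 := by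
    intro x
    rw [← SimpleGraph.neighborFinset_eq_filter]
    exact h3 x
  have hrow1 : ∀ a : V, (∑ b : V, if a ∈ A ∧ H.Adj a b then (1:ℕ) else 0) =
      if a ∈ A then 3 else 0 := by
    intro a
    by_cases hA : a ∈ A
    · rw [if_pos hA]
      have hz : ∀ b ∈ Finset.univ, (if a ∈ A ∧ H.Adj a b then (1:ℕ) else 0) =
          if H.Adj a b then 1 else 0 := by
        intro b _
        by_cases hadj : H.Adj a b
        · rw [if_pos ⟨hA, hadj⟩, if_pos hadj]
        · rw [if_neg (fun h => hadj h.2), if_neg hadj]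
      rw [Finset.sum_congr rfl hz, ← Finset.card_filter]
      exact hdeg a
    · rw [if_neg hA]
      have hz : ∀ b ∈ Finset.univ, (if a ∈ A ∧ H.Adj a b then (1:ℕ) else 0) = 0 :=
        fun b _ => if_neg (fun h => hA h.1)
      rw [Finset.sum_congr rfl hz, Finset.sum_const_zero]
  have hrow2 : ∀ b : V, (∑ a : V, if b ∉ A ∧ H.Adj b a then (1:ℕ) else 0) =
      if b ∉ A then 3 else 0 := by
    intro b
    by_cases hA : b ∉ A
    · rw [if_pos hA]
      have hz : ∀ a ∈ Finset.univ, (if b ∉ A ∧ H.Adj b a then (1:ℕ) else 0) =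
          if H.Adj b a then 1 else 0 := by
        intro a _
        by_cases hadj : H.Adj b a
        · rw [if_pos ⟨hA, hadj⟩, if_pos hadj]
        · rw [if_neg (fun h => hadj h.2), if_neg hadj]
      rw [Finset.sum_congr rfl hz, ← Finset.card_filter]
      exact hdeg b
    · rw [if_neg hA]
      have hz : ∀ a ∈ Finset.univ, (if b ∉ A ∧ H.Adj b a then (1:ℕ) else 0) = 0 :=
        fun a _ => if_neg (fun h => hA h.1)
      rw [Finset.sum_congr rfl hz, Finset.sum_const_zero]
  have hsum1 : (∑ a : V, if a ∈ A then (3:ℕ) else 0) =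
      3 * (Finset.univ.filter (fun x => x ∈ A)).card := by
    rw [← Finset.sum_filter, Finset.sum_const, smul_eq_mul, mul_comm]
  have hsum2 : (∑ b : V, if b ∉ A then (3:ℕ) else 0) =
      3 * (Finset.univ.filter (fun x => x ∉ A)).card := by
    rw [← Finset.sum_filter, Finset.sum_const, smul_eq_mul, mul_comm]
  have h1 : (∑ a : V, ∑ b : V, if a ∈ A ∧ H.Adj a b then (1:ℕ) else 0) =
      3 * (Finset.univ.filter (fun x => x ∈ A)).card := by
    rw [Finset.sum_congr rfl (fun a _ => hrow1 a), hsum1]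
  have h2 : (∑ b : V, ∑ a : V, if b ∉ A ∧ H.Adj b a then (1:ℕ) else 0) =
      3 * (Finset.univ.filter (fun x => x ∉ A)).card := by
    rw [Finset.sum_congr rfl (fun b _ => hrow2 b), hsum2]
  have hpt : ∀ a b : V, ((if a ∈ A ∧ H.Adj a b then 1 else 0) : ℕ) =
      (if b ∉ A ∧ H.Adj b a then 1 else 0) := by
    intro a b
    refine if_congr ?_ rfl rfl
    constructor
    · rintro ⟨ha, hadj⟩
      rcases hbip a b hadj with ⟨_, h⟩ | ⟨h, _⟩
      · exact ⟨h, hadj.symm⟩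
      · exact absurd ha h
    · rintro ⟨hb, hadj⟩
      rcases hbip b a hadj with ⟨h, _⟩ | ⟨_, h⟩
      · exact absurd h hb
      · exact ⟨h, hadj.symm⟩
  have heq : (∑ a : V, ∑ b : V, if a ∈ A ∧ H.Adj a b then (1:ℕ) else 0) =
      (∑ b : V, ∑ a : V, if b ∉ A ∧ H.Adj b a then (1:ℕ) else 0) := by
    rw [Finset.sum_congr rfl
      (fun a _ => Finset.sum_congr rfl (fun b _ => hpt a b))]
    exact Finset.sum_comm
  have hcards : (Finset.univ.filter (fun x => x ∈ A)).card +
      (Finset.univ.filter (fun x => x ∉ A)).card = Fintype.card V := by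
    rw [Finset.card_filter_add_card_filter_not, Finset.card_univ]
  omega

lemma order_aux (S : Finset V) : (auxMG H S).order + S.card = Fintype.card V := by
  have h1 : (auxMG H S).order = (Finset.univ.filter (fun v => v ∉ S)).card := by
    have h0 : (auxMG H S).order = Fintype.card {v : V // v ∉ S} := by
      letI : Fintype (auxMG H S).V := (auxMG H S).fin
      exact Fintype.card_congr (Equiv.refl _)
    rw [h0, Fintype.card_subtype]
  have h2 : (Finset.univ.filter (fun v => v ∈ S)).card +
      (Finset.univ.filter (fun v => v ∉ S)).card = Fintype.card V := by
    rw [Finset.card_filter_add_card_filter_not, Finset.card_univ]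
  have h3 : Finset.univ.filter (fun v => v ∈ S) = S := Finset.filter_univ_mem S
  rw [h3] at h2
  omega

end AuxStmt12


/-- If `H` is a simple 3-regular bipartite graph on `n` vertices
and `G` is its doubling, then the Δ-YY equivalence class of `G` contains a
multigraph with at most `n / 2` vertices; in particular every multigraph with
the minimum number of vertices in the class has at most `n / 2` vertices. -/
theorem stmt_12 {V : Type} [Fintype V] (H : SimpleGraph V) [DecidableRel H.Adj]
    (h3 : H.IsRegularOfDegree 3)
    (hbip : ∃ A : Set V, ∀ u v : V, H.Adj u v →
      ((u ∈ A ∧ v ∉ A) ∨ (u ∉ A ∧ v ∈ A))) :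
    (∃ K : MG, MG.DYYEquiv (MG.doubling H) K ∧ 2 * K.order ≤ Fintype.card V) ∧
    (∀ K : MG, MG.DYYEquiv (MG.doubling H) K →
      (∀ L : MG, MG.DYYEquiv (MG.doubling H) L → K.order ≤ L.order) →
      2 * K.order ≤ Fintype.card V) := by
  obtain ⟨A, hbip⟩ := hbip
  have hcount : Fintype.card V = 2 * (Finset.univ.filter (fun x => x ∈ A)).card :=
    count_aux H A hbip h3
  have hchain : MG.DYYEquiv (MG.doubling H)
      (auxMG H (Finset.univ.filter (fun x => x ∈ A))) :=
    chain_aux H A hbip h3 _ (fun s hs => (Finset.mem_filter.mp hs).2)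
  have hord := order_aux H (Finset.univ.filter (fun x => x ∈ A))
  refine ⟨⟨auxMG H (Finset.univ.filter (fun x => x ∈ A)), hchain, by omega⟩, ?_⟩
  intro K hK hmin
  have hle := hmin (auxMG H (Finset.univ.filter (fun x => x ∈ A))) hchain
  omega
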